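/- Let X be a real tree (a geodesic metric space that is 0-hyperbolic) and let S ⊆ Isom(X) be a finite set of isometries. Then L(S) = max_{a,b ∈ S} max{ L(a), L(ab)/2 } = λ₂(S). -/

import Mathlib

open Pointwise Filter

/-- The joint displacement of a set of isometries at a point:
`L(S,x) = max_{s ∈ S} d(x, s x)`. -/
noncomputable def jointDispAt {X : Type*} [MetricSpace X] (S : Set (X ≃ᵢ X)) (x : X) : ℝ :=
  sSup ((fun s : X ≃ᵢ X => dist x (s x)) '' S)

/-- The joint minimal displacement `L(S) = inf_x L(S,x)`. -/
noncomputable def jointMinDisp {X : Type*} [MetricSpace X] (S : Set (X ≃ᵢ X)) : ℝ :=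
  sInf (Set.range (jointDispAt S))

/-- The asymptotic joint displacement `ℓ(S) = lim_n L(S^n)/n`; the limit exists by
subadditivity, hence agrees with the `limsup` used here. -/
noncomputable def asympDisp {X : Type*} [MetricSpace X] (S : Set (X ≃ᵢ X)) : ℝ :=
  Filter.limsup (fun n : ℕ => jointMinDisp (S ^ n) / n) Filter.atTop

/-- `λ(S) = max_{s ∈ S} ℓ(s)`. -/
noncomputable def lamD {X : Type*} [MetricSpace X] (S : Set (X ≃ᵢ X)) : ℝ :=
  sSup ((fun s : X ≃ᵢ X => asympDisp {s}) '' S)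

/-- `λ_k(S) = max_{1 ≤ j ≤ k} λ(S^j)/j`. -/
noncomputable def lamK {X : Type*} [MetricSpace X] (k : ℕ) (S : Set (X ≃ᵢ X)) : ℝ :=
  sSup ((fun j : ℕ => lamD (S ^ j) / j) '' Set.Icc 1 k)

/-- `λ_∞(S) = sup_{j ≥ 1} λ(S^j)/j`. -/
noncomputable def lamInf {X : Type*} [MetricSpace X] (S : Set (X ≃ᵢ X)) : ℝ :=
  sSup ((fun j : ℕ => lamD (S ^ j) / j) '' Set.Ici 1)

/-- A geodesic segment from `a` to `b`: an isometric image of the interval `[0, d(a,b)]`. -/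
def IsGeodesicSegment {X : Type*} [MetricSpace X] (s : Set X) (a b : X) : Prop :=
  ∃ f : ℝ → X, f 0 = a ∧ f (dist a b) = b ∧
    (∀ u ∈ Set.Icc (0 : ℝ) (dist a b), ∀ v ∈ Set.Icc (0 : ℝ) (dist a b),
      dist (f u) (f v) = |u - v|) ∧
    s = f '' Set.Icc (0 : ℝ) (dist a b)

/-- A geodesic metric space: every two points are joined by a geodesic segment. -/
def GeodesicSpace (X : Type*) [MetricSpace X] : Prop :=
  ∀ a b : X, ∃ s : Set X, IsGeodesicSegment s a b

/-- `δ`-hyperbolicity: every geodesic triangle is `δ`-thin, i.e. each side is contained in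
the closed `δ`-neighborhood of the union of the other two sides. -/
def GromovHyperbolic (X : Type*) [MetricSpace X] (δ : ℝ) : Prop :=
  ∀ a b c : X, ∀ sab sbc sca : Set X,
    IsGeodesicSegment sab a b → IsGeodesicSegment sbc b c → IsGeodesicSegment sca c a →
      (∀ x ∈ sab, ∃ y ∈ sbc ∪ sca, dist x y ≤ δ) ∧
      (∀ x ∈ sbc, ∃ y ∈ sab ∪ sca, dist x y ≤ δ) ∧
      (∀ x ∈ sca, ∃ y ∈ sab ∪ sbc, dist x y ≤ δ)

/-- The CAT(0) comparison inequality: for all `a b c` and every midpoint `m` of a geodesic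
from `b` to `c`, `2 d(a,m)² ≤ d(a,b)² + d(a,c)² - d(b,c)²/2`. -/
def CAT0 (X : Type*) [MetricSpace X] : Prop :=
  ∀ a b c m : X, dist b m = dist b c / 2 → dist m c = dist b c / 2 →
    2 * dist a m ^ 2 ≤ dist a b ^ 2 + dist a c ^ 2 - dist b c ^ 2 / 2

/-- A subset is (geodesically) convex if every geodesic segment between two of its points is
contained in it. -/
def GeodConvex {X : Type*} [MetricSpace X] (C : Set X) : Prop :=
  ∀ a ∈ C, ∀ b ∈ C, ∀ s : Set X, IsGeodesicSegment s a b → s ⊆ C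

/-- Translation length `L(g) = inf_x d(x, g x)`. -/
noncomputable def transLen {X : Type*} [MetricSpace X] (g : X ≃ᵢ X) : ℝ :=
  sInf (Set.range fun x : X => dist x (g x))

/-- Asymptotic translation length `ℓ(g) = lim_n L(g^n)/n`. -/
noncomputable def asympTransLen {X : Type*} [MetricSpace X] (g : X ≃ᵢ X) : ℝ :=
  Filter.limsup (fun n : ℕ => transLen (g ^ n) / n) Filter.atTop

section TreeGeom
variable {X : Type*} [MetricSpace X]

/-- Gromov product at basepoint `z`. -/
noncomputable def gpr (z x y : X) : ℝ := (dist z x + dist z y - dist x y) / 2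

/-- Metric betweenness. -/
def MBtw (p m q : X) : Prop := dist p m + dist m q = dist p q

lemma gpr_nonneg (z x y : X) : 0 ≤ gpr z x y := by
  have h := dist_triangle x z y
  simp only [gpr]
  rw [dist_comm x z] at h
  linarith

lemma gpr_isom (g : X ≃ᵢ X) (z x y : X) : gpr (g z) (g x) (g y) = gpr z x y := by
  simp [gpr, g.dist_eq]

lemma mbtw_isom (g : X ≃ᵢ X) {p m q : X} (h : MBtw p m q) : MBtw (g p) (g m) (g q) := by
  simpa [MBtw, g.dist_eq] using h

lemma gpr_of_mbtw {p m q : X} (h : MBtw p m q) : gpr p m q = dist p m := by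
  simp only [MBtw] at h; simp only [gpr]; linarith

lemma pointAt (hgeo : GeodesicSpace X) (x y : X) {t : ℝ} (h0 : 0 ≤ t) (h1 : t ≤ dist x y) :
    ∃ m : X, dist x m = t ∧ dist m y = dist x y - t := by
  obtain ⟨s, f, hf0, hf1, hiso, -⟩ := hgeo x y
  have h := hiso 0 ⟨le_refl _, dist_nonneg⟩ t ⟨h0, h1⟩
  rw [hf0] at h
  have h' := hiso t ⟨h0, h1⟩ (dist x y) ⟨dist_nonneg, le_refl _⟩
  rw [hf1] at h'
  refine ⟨f t, ?_, ?_⟩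
  · rw [h, abs_of_nonpos (by linarith)]; ring
  · rw [h', abs_of_nonpos (by linarith)]; ring

/-- The key consequence of 0-thin triangles: on any geodesic from `x` to `z` there is a
"center" point for any third point `w`. -/
lemma center_on (htree : GromovHyperbolic X 0) (hgeo : GeodesicSpace X)
    (x z : X) (f : ℝ → X)
    (hf0 : f 0 = x) (hf1 : f (dist x z) = z)
    (hiso : ∀ u ∈ Set.Icc (0 : ℝ) (dist x z), ∀ v ∈ Set.Icc (0 : ℝ) (dist x z),
      dist (f u) (f v) = |u - v|) (w : X) :
    gpr x z w ∈ Set.Icc (0:ℝ) (dist x z) ∧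
    dist x (f (gpr x z w)) = gpr x z w ∧
    dist z (f (gpr x z w)) = gpr z x w ∧
    dist w (f (gpr x z w)) = gpr w x z := by
  set D := dist x z with hD
  obtain ⟨szw, hszw⟩ := hgeo z w
  obtain ⟨swx, hswx⟩ := hgeo w x
  have hsab : IsGeodesicSegment (f '' Set.Icc 0 D) x z := ⟨f, hf0, hf1, hiso, rfl⟩
  obtain ⟨hthin, -, -⟩ := htree x z w (f '' Set.Icc 0 D) szw swx hsab hszw hswx
  set A : Set ℝ := {u | u ∈ Set.Icc (0:ℝ) D ∧ dist w (f u) + dist (f u) x = dist w x} with hA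
  set B : Set ℝ := {u | u ∈ Set.Icc (0:ℝ) D ∧ dist z (f u) + dist (f u) w = dist z w} with hB
  have hDnn : (0:ℝ) ≤ D := dist_nonneg
  have cover : ∀ u ∈ Set.Icc (0:ℝ) D, u ∈ A ∨ u ∈ B := by
    intro u hu
    obtain ⟨y, hy, hdy⟩ := hthin (f u) ⟨u, hu, rfl⟩
    have hfy : f u = y := dist_le_zero.mp hdy
    rcases hy with hy | hy
    · right
      obtain ⟨g, hg0, hg1, hgiso, hgs⟩ := hszw
      rw [hgs] at hy
      obtain ⟨v, hv, hgv⟩ := hy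
      refine ⟨hu, ?_⟩
      have h1 : dist z y = |0 - v| := by
        have h' := hgiso 0 ⟨le_refl _, dist_nonneg⟩ v hv
        rw [hg0, hgv] at h'; exact h'
      have h2 : dist y w = |v - dist z w| := by
        have h' := hgiso v hv (dist z w) ⟨dist_nonneg, le_refl _⟩
        rw [hg1, hgv] at h'; exact h'
      rw [hfy, h1, h2, abs_of_nonpos (by linarith [hv.1]), abs_of_nonpos (by linarith [hv.2])]
      ring
    · left
      obtain ⟨g, hg0, hg1, hgiso, hgs⟩ := hswx
      rw [hgs] at hy
      obtain ⟨v, hv, hgv⟩ := hy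
      refine ⟨hu, ?_⟩
      have h1 : dist w y = |0 - v| := by
        have h' := hgiso 0 ⟨le_refl _, dist_nonneg⟩ v hv
        rw [hg0, hgv] at h'; exact h'
      have h2 : dist y x = |v - dist w x| := by
        have h' := hgiso v hv (dist w x) ⟨dist_nonneg, le_refl _⟩
        rw [hg1, hgv] at h'; exact h'
      rw [hfy, h1, h2, abs_of_nonpos (by linarith [hv.1]), abs_of_nonpos (by linarith [hv.2])]
      ring
  have hA0 : (0:ℝ) ∈ A := by
    refine ⟨⟨le_refl _, hDnn⟩, ?_⟩
    rw [hf0]; simp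
  have hAbdd : BddAbove A := ⟨D, fun u hu => hu.1.2⟩
  have hAne : A.Nonempty := ⟨0, hA0⟩
  set u₀ := sSup A with hu₀
  have hu₀mem : u₀ ∈ Set.Icc (0:ℝ) D :=
    ⟨le_csSup hAbdd hA0, csSup_le hAne fun u hu => hu.1.2⟩
  have hfdist : ∀ u ∈ Set.Icc (0:ℝ) D, ∀ v ∈ Set.Icc (0:ℝ) D,
      dist (f u) (f v) = |u - v| := hiso
  have hAdefect : dist w (f u₀) + dist (f u₀) x = dist w x := by
    have key : ∀ ε > (0:ℝ), dist w (f u₀) + dist (f u₀) x ≤ dist w x + 2 * ε := by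
      intro ε hε
      obtain ⟨u, hu, hlt⟩ := exists_lt_of_lt_csSup hAne (by linarith : u₀ - ε < u₀)
      have huIcc := hu.1
      have hle : u ≤ u₀ := le_csSup hAbdd hu
      have hd : dist (f u₀) (f u) = u₀ - u := by
        rw [hfdist u₀ hu₀mem u huIcc, abs_of_nonneg (by linarith)]
      have t1 : dist w (f u₀) ≤ dist w (f u) + (u₀ - u) := by
        calc dist w (f u₀) ≤ dist w (f u) + dist (f u) (f u₀) := dist_triangle _ _ _
        _ = dist w (f u) + (u₀ - u) := by rw [dist_comm (f u) (f u₀), hd]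
      have t2 : dist (f u₀) x ≤ (u₀ - u) + dist (f u) x := by
        calc dist (f u₀) x ≤ dist (f u₀) (f u) + dist (f u) x := dist_triangle _ _ _
        _ = (u₀ - u) + dist (f u) x := by rw [hd]
      have := hu.2
      linarith
    have htri : dist w x ≤ dist w (f u₀) + dist (f u₀) x := dist_triangle _ _ _
    by_contra hne
    have hlt : dist w x < dist w (f u₀) + dist (f u₀) x := lt_of_le_of_ne htri (Ne.symm hne)
    have := key ((dist w (f u₀) + dist (f u₀) x - dist w x)/4) (by linarith)
    linarith
  have hBdefect : dist z (f u₀) + dist (f u₀) w = dist z w := by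
    rcases eq_or_lt_of_le hu₀mem.2 with heq | hlt
    · rw [heq, hf1]; simp
    · have key : ∀ ε > (0:ℝ), dist z (f u₀) + dist (f u₀) w ≤ dist z w + 2 * ε := by
        intro ε hε
        set u := min (u₀ + ε) D with hudef
        have huIcc : u ∈ Set.Icc (0:ℝ) D := ⟨le_min (by linarith [hu₀mem.1]) hDnn, min_le_right _ _⟩
        have hgt : u₀ < u := lt_min (by linarith) hlt
        have hnotA : u ∉ A := fun hmem => absurd (le_csSup hAbdd hmem) (not_le.mpr hgt)
        have huB : u ∈ B := (cover u huIcc).resolve_left hnotA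
        have hd : dist (f u₀) (f u) = u - u₀ := by
          rw [hfdist u₀ hu₀mem u huIcc, abs_of_nonpos (by linarith)]; ring
        have hdle : u - u₀ ≤ ε := by
          have : u ≤ u₀ + ε := min_le_left _ _
          linarith
        have t1 : dist z (f u₀) ≤ dist z (f u) + ε := by
          calc dist z (f u₀) ≤ dist z (f u) + dist (f u) (f u₀) := dist_triangle _ _ _
          _ ≤ dist z (f u) + ε := by rw [dist_comm (f u) (f u₀), hd]; linarith
        have t2 : dist (f u₀) w ≤ ε + dist (f u) w := by
          calc dist (f u₀) w ≤ dist (f u₀) (f u) + dist (f u) w := dist_triangle _ _ _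
          _ ≤ ε + dist (f u) w := by rw [hd]; linarith
        have := huB.2
        linarith
      have htri : dist z w ≤ dist z (f u₀) + dist (f u₀) w := dist_triangle _ _ _
      by_contra hne
      have hlt2 : dist z w < dist z (f u₀) + dist (f u₀) w := lt_of_le_of_ne htri (Ne.symm hne)
      have := key ((dist z (f u₀) + dist (f u₀) w - dist z w)/4) (by linarith)
      linarith
  have hd1 : dist x (f u₀) = u₀ := by
    have h := hfdist 0 ⟨le_refl _, hDnn⟩ u₀ hu₀mem
    rw [hf0] at h
    rw [h, abs_of_nonpos (by linarith [hu₀mem.1])]; ring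
  have hd2 : dist z (f u₀) = D - u₀ := by
    have h := hfdist D ⟨hDnn, le_refl _⟩ u₀ hu₀mem
    rw [hf1] at h
    rw [h, abs_of_nonneg (by linarith [hu₀mem.2])]
  have cwx : dist w x = dist x w := dist_comm _ _
  have cfx : dist (f u₀) x = dist x (f u₀) := dist_comm _ _
  have cfw : dist (f u₀) w = dist w (f u₀) := dist_comm _ _
  have hu₀val : u₀ = gpr x z w := by
    simp only [gpr, ← hD]
    linarith
  rw [← hu₀val]
  refine ⟨hu₀mem, hd1, ?_, ?_⟩
  · simp only [gpr, ← hD, dist_comm z x]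
    linarith
  · simp only [gpr, ← hD, dist_comm w x, dist_comm w z]
    linarith

/-- The four point condition. -/
lemma four_point (htree : GromovHyperbolic X 0) (hgeo : GeodesicSpace X) (w x y z : X) :
    dist w y + dist x z ≤ max (dist w x + dist y z) (dist w z + dist x y) := by
  obtain ⟨s, f, hf0, hf1, hiso, -⟩ := hgeo x z
  obtain ⟨hw1, hw2, hw3, hw4⟩ := center_on htree hgeo x z f hf0 hf1 hiso w
  obtain ⟨hy1, hy2, hy3, hy4⟩ := center_on htree hgeo x z f hf0 hf1 hiso y
  have hmm : dist (f (gpr x z w)) (f (gpr x z y)) = |gpr x z w - gpr x z y| :=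
    hiso _ hw1 _ hy1
  have tri : dist w y ≤ dist w (f (gpr x z w)) + dist (f (gpr x z w)) (f (gpr x z y))
      + dist (f (gpr x z y)) y :=
    dist_triangle4 _ _ _ _
  rw [hmm, hw4, dist_comm (f (gpr x z y)) y, hy4] at tri
  simp only [gpr] at tri ⊢
  rcases abs_cases ((dist x z + dist x w - dist z w) / 2 - (dist x z + dist x y - dist z y) / 2)
    with ⟨heq, -⟩ | ⟨heq, -⟩ <;> rw [heq] at tri
  · exact le_max_of_le_left (by
      linarith [dist_comm x w, dist_comm z w, dist_comm x y, dist_comm z y, dist_comm y x,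
        dist_comm y z, dist_comm w z])
  · exact le_max_of_le_right (by
      linarith [dist_comm x w, dist_comm z w, dist_comm x y, dist_comm z y, dist_comm y x,
        dist_comm y z, dist_comm w z])

end TreeGeom
section TreeGeom2
variable {X : Type*} [MetricSpace X]

/-- Abstract four-point condition. -/
def FourPt (X : Type*) [MetricSpace X] : Prop :=
  ∀ w x y z : X, dist w y + dist x z ≤ max (dist w x + dist y z) (dist w z + dist x y)

/-- Abstract median existence. -/
def HasMedians (X : Type*) [MetricSpace X] : Prop :=
  ∀ x z w : X, ∃ m : X, dist x m = gpr x z w ∧ dist z m = gpr z x w ∧ dist w m = gpr w x z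

lemma fourPt_of_tree (htree : GromovHyperbolic X 0) (hgeo : GeodesicSpace X) : FourPt X :=
  four_point htree hgeo

lemma hasMedians_of_tree (htree : GromovHyperbolic X 0) (hgeo : GeodesicSpace X) :
    HasMedians X := by
  intro x z w
  obtain ⟨s, f, hf0, hf1, hiso, -⟩ := hgeo x z
  obtain ⟨h1, h2, h3, h4⟩ := center_on htree hgeo x z f hf0 hf1 hiso w
  exact ⟨f (gpr x z w), h2, h3, h4⟩

/-- Gromov product inequality. -/
lemma gpr_min_le (h4 : FourPt X) (w x y z : X) :
    min (gpr w x z) (gpr w z y) ≤ gpr w x y := by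
  have h := h4 x w y z
  simp only [gpr]
  rcases max_cases (dist x w + dist y z) (dist x z + dist w y) with ⟨hm, -⟩ | ⟨hm, -⟩ <;>
    rw [hm] at h
  · refine le_trans (min_le_right _ _) ?_
    linarith [dist_comm x w, dist_comm y z, dist_comm z y, dist_comm w z]
  · refine le_trans (min_le_left _ _) ?_
    linarith [dist_comm x z, dist_comm w y, dist_comm x w]

/-- Two points between `p` and `q` at the same distance from `p` coincide. -/
lemma btw_unique (h4 : FourPt X) {p q m m' : X} (h1 : MBtw p m q) (h2 : MBtw p m' q)
    (h3 : dist p m = dist p m') : m = m' := by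
  have h := h4 m p m' q
  simp only [MBtw] at h1 h2
  have c1 := dist_comm p m
  have c2 := dist_comm p m'
  rcases max_cases (dist m p + dist m' q) (dist m q + dist p m') with ⟨hm, -⟩ | ⟨hm, -⟩ <;>
    rw [hm] at h <;>
  · have : dist m m' ≤ 0 := by linarith
    exact dist_le_zero.mp this

/-- If `m` and `w` are both between `p` and `q` with `m` closer to `p`, then `m` is between
`p` and `w`. -/
lemma btw_sub (h4 : FourPt X) {p q m w : X} (h1 : MBtw p m q) (h2 : MBtw p w q)
    (h3 : dist p m ≤ dist p w) : MBtw p m w ∧ dist m w = dist p w - dist p m := by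
  have h := h4 m p w q
  simp only [MBtw] at h1 h2
  have hge : dist p w - dist p m ≤ dist m w := by
    have := dist_triangle p m w
    linarith [dist_comm p m]
  have hle : dist m w ≤ dist p w - dist p m := by
    rcases max_cases (dist m p + dist w q) (dist m q + dist p w) with ⟨hm, -⟩ | ⟨hm, -⟩ <;>
      rw [hm] at h <;> linarith [dist_comm p m, dist_comm p w]
  have := le_antisymm hle hge
  constructor
  · simp only [MBtw]; linarith
  · linarith

/-- Convexity of displacement sublevel sets along betweenness. -/
lemma disp_btw (h4 : FourPt X) (g : X ≃ᵢ X) {p q m : X} {r : ℝ}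
    (hp : dist p (g p) ≤ r) (hq : dist q (g q) ≤ r) (hm : MBtw p m q) :
    dist m (g m) ≤ r := by
  simp only [MBtw] at hm
  set t := dist p m with ht
  set D := dist p q with hD
  have hmq : dist m q = D - t := by linarith
  have hgpm : dist (g p) (g m) = t := by rw [g.dist_eq]
  have hgmq : dist (g m) (g q) = D - t := by rw [g.dist_eq]; exact hmq
  have hgpq : dist (g p) (g q) = D := by rw [g.dist_eq]
  have hgpq' : dist (g p) q ≤ D + dist q (g q) := by
    calc dist (g p) q ≤ dist (g p) (g q) + dist (g q) q := dist_triangle _ _ _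
    _ = D + dist q (g q) := by rw [hgpq, dist_comm (g q) q]
  have hgqp : dist p (g q) ≤ D + dist q (g q) := by
    calc dist p (g q) ≤ dist p q + dist q (g q) := dist_triangle _ _ _
    _ = D + dist q (g q) := by rw [← hD]
  -- step 1 : dist (g p) m ≤ max (dist p (g p) - t) (dist q (g q) + t)
  have s1 : dist (g p) m ≤ max (dist p (g p) - t) (dist q (g q) + t) := by
    have h := h4 (g p) p m q
    rcases max_cases (dist (g p) p + dist m q) (dist (g p) q + dist p m) with ⟨hmx, -⟩ | ⟨hmx, -⟩ <;>
      rw [hmx] at h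
    · exact le_max_of_le_left (by linarith [dist_comm (g p) p])
    · exact le_max_of_le_right (by linarith)
  -- step 2 : dist m (g q) ≤ max (dist q (g q) - (D - t)) (dist p (g p) + (D - t))
  have hgqp' : dist (g q) p ≤ D + dist p (g p) := by
    calc dist (g q) p ≤ dist (g q) (g p) + dist (g p) p := dist_triangle _ _ _
    _ = D + dist p (g p) := by rw [dist_comm (g q) (g p), hgpq, dist_comm (g p) p]
  have s2 : dist m (g q) ≤ max (dist q (g q) - (D - t)) (dist p (g p) + (D - t)) := by
    have h := h4 (g q) q m p
    rcases max_cases (dist (g q) q + dist m p) (dist (g q) p + dist q m) with ⟨hmx, -⟩ | ⟨hmx, -⟩ <;>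
      rw [hmx] at h
    · exact le_max_of_le_left (by
        linarith [dist_comm m p, dist_comm (g q) q, dist_comm (g q) m, dist_comm q p])
    · exact le_max_of_le_right (by linarith [dist_comm q m, dist_comm (g q) m, dist_comm q p])
  -- step 3
  have h := h4 m (g p) (g m) (g q)
  rw [hgpq] at h
  have hfin : dist m (g m) ≤ max (dist p (g p)) (dist q (g q)) := by
    rcases max_cases (dist m (g p) + dist (g m) (g q)) (dist m (g q) + dist (g p) (g m))
      with ⟨hmx, -⟩ | ⟨hmx, -⟩ <;> rw [hmx] at h
    · rcases max_cases (dist p (g p) - t) (dist q (g q) + t) with ⟨hmy, -⟩ | ⟨hmy, -⟩ <;>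
        rw [hmy] at s1
      · exact le_max_of_le_left (by
          linarith [dist_comm m (g p), dist_nonneg (x := p) (y := m)])
      · exact le_max_of_le_right (by linarith [dist_comm m (g p)])
    · rcases max_cases (dist q (g q) - (D - t)) (dist p (g p) + (D - t))
        with ⟨hmy, -⟩ | ⟨hmy, -⟩ <;> rw [hmy] at s2
      · exact le_max_of_le_right (by linarith [dist_nonneg (x := m) (y := q), hmq])
      · exact le_max_of_le_left (by linarith)
  rcases max_cases (dist p (g p)) (dist q (g q)) with ⟨hmx, -⟩ | ⟨hmx, -⟩ <;> rw [hmx] at hfin <;>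
    linarith

/-- Existence of gates on displacement sublevel sets. -/
lemma gate_exists (hgeo : GeodesicSpace X) (h4 : FourPt X) (hmed : HasMedians X)
    (g : X ≃ᵢ X) (r : ℝ) {p : X} (hp : dist p (g p) ≤ r) (y : X) :
    ∃ u : X, dist u (g u) ≤ r ∧ ∀ x : X, dist x (g x) ≤ r →
      dist y x = dist y u + dist u x := by
  obtain ⟨s, f, hf0, hf1, hiso, -⟩ := hgeo y p
  set D := dist y p with hD
  have hDnn : (0:ℝ) ≤ D := dist_nonneg
  set T : Set ℝ := {t | t ∈ Set.Icc (0:ℝ) D ∧ dist (f t) (g (f t)) ≤ r} with hT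
  have hTD : D ∈ T := ⟨⟨hDnn, le_refl _⟩, by rw [hf1]; exact hp⟩
  have hTne : T.Nonempty := ⟨D, hTD⟩
  have hTbdd : BddBelow T := ⟨0, fun t htm => htm.1.1⟩
  set t₀ := sInf T with ht₀
  have ht₀mem : t₀ ∈ Set.Icc (0:ℝ) D :=
    ⟨le_csInf hTne fun t htm => htm.1.1, csInf_le hTbdd hTD⟩
  set u := f t₀ with hu
  have hyu : dist y u = t₀ := by
    have h := hiso 0 ⟨le_refl _, hDnn⟩ t₀ ht₀mem
    rw [hf0] at h
    rw [hu, h, abs_of_nonpos (by linarith [ht₀mem.1])]; ring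
  have hudisp : dist u (g u) ≤ r := by
    refine le_of_forall_pos_le_add fun ε hε => ?_
    obtain ⟨t, htm, hlt⟩ := exists_lt_of_csInf_lt hTne (by linarith : t₀ < t₀ + ε / 3)
    have hge : t₀ ≤ t := csInf_le hTbdd htm
    have hd : dist u (f t) = t - t₀ := by
      rw [hu, hiso t₀ ht₀mem t htm.1, abs_of_nonpos (by linarith)]; ring
    have : dist u (g u) ≤ dist u (f t) + dist (f t) (g (f t)) + dist (g (f t)) (g u) :=
      dist_triangle4 _ _ _ _
    rw [g.dist_eq, dist_comm (f t) u, hd] at this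
    linarith [htm.2]
  refine ⟨u, hudisp, fun x hx => ?_⟩
  obtain ⟨m, hym, hxm, hpm⟩ := hmed y x p
  have hbxp : MBtw x m p := by
    simp only [MBtw, gpr] at hxm hpm ⊢
    rw [dist_comm m p, hpm, hxm]
    linarith [dist_comm y x, dist_comm y p, dist_comm x p]
  have hbyp : MBtw y m p := by
    simp only [MBtw, gpr] at hym hpm ⊢
    rw [dist_comm m p, hpm, hym]
    linarith [dist_comm y x, dist_comm y p, dist_comm x p]
  have hbyx : MBtw y m x := by
    simp only [MBtw, gpr] at hym hxm ⊢
    rw [dist_comm m x, hxm, hym]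
    linarith [dist_comm y x]
  have hmdisp : dist m (g m) ≤ r := disp_btw h4 g hx hp hbxp
  set tm := dist y m with htm
  have htmIcc : tm ∈ Set.Icc (0:ℝ) D := by
    constructor
    · exact dist_nonneg
    · simp only [MBtw] at hbyp; rw [htm]; linarith [dist_nonneg (x := m) (y := p)]
  have hfm : f tm = m := by
    have h0 : dist y (f tm) = tm := by
      have h := hiso 0 ⟨le_refl _, hDnn⟩ tm htmIcc
      rw [hf0] at h
      rw [h, abs_of_nonpos (by linarith [htmIcc.1])]; ring
    have h1 : MBtw y (f tm) p := by
      have h := hiso tm htmIcc D ⟨hDnn, le_refl _⟩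
      rw [hf1] at h
      simp only [MBtw]
      rw [h0, h, abs_of_nonpos (by linarith [htmIcc.2])]; ring
    exact btw_unique h4 h1 hbyp (by rw [h0])
  have ht₀le : t₀ ≤ tm := csInf_le hTbdd ⟨htmIcc, by rw [hfm]; exact hmdisp⟩
  have hum : dist u m = tm - t₀ := by
    rw [hu, ← hfm, hiso t₀ ht₀mem tm htmIcc, abs_of_nonpos (by linarith)]; ring
  have hymx : dist y x = dist y m + dist m x := by
    simp only [MBtw] at hbyx; linarith
  have hle : dist y u + dist u x ≤ dist y x := by
    have : dist u x ≤ dist u m + dist m x := dist_triangle _ _ _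
    rw [hymx, hyu]
    linarith
  have hge : dist y x ≤ dist y u + dist u x := dist_triangle _ _ _
  linarith

end TreeGeom2
section TreeGeom3
variable {X : Type*} [MetricSpace X]

lemma gpr_comm (z x y : X) : gpr z x y = gpr z y x := by
  simp only [gpr]
  rw [dist_comm x y]
  ring

lemma isom_inv_apply (g : X ≃ᵢ X) (x : X) : g (g⁻¹ x) = x := g.apply_symm_apply x

lemma inv_disp (g : X ≃ᵢ X) (x : X) : dist (g⁻¹ x) x = dist x (g x) := by
  calc dist (g⁻¹ x) x = dist (g (g⁻¹ x)) (g x) := (g.dist_eq _ _).symm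
  _ = dist x (g x) := by rw [isom_inv_apply]

/-- Displacement at a point in terms of the gate on a displacement sublevel set. -/
lemma lemG (h4 : FourPt X) (hmed : HasMedians X) (g : X ≃ᵢ X) {r : ℝ} {y v : X}
    (hv : dist v (g v) ≤ r)
    (hgate : ∀ x, dist x (g x) ≤ r → dist y x = dist y v + dist v x) :
    dist y (g y) = 2 * dist y v + dist v (g v) ∧ MBtw y v (g y) := by
  have hgvC : dist (g v) (g (g v)) ≤ r := by rw [g.dist_eq]; exact hv
  have hinv1 : dist (g⁻¹ v) v = dist v (g v) := inv_disp g v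
  have hginvC : dist (g⁻¹ v) (g (g⁻¹ v)) ≤ r := by
    rw [isom_inv_apply]
    exact le_trans (le_of_eq hinv1) hv
  have main : dist y (g y) = 2 * dist y v + dist v (g v) := by
    rcases eq_or_lt_of_le (dist_nonneg : (0:ℝ) ≤ dist v (g v)) with hβ0 | hβpos
    · -- fixed point case
      have hfix : g v = v := (dist_eq_zero.mp hβ0.symm).symm
      obtain ⟨m, hm1, hm2, hm3⟩ := hmed v y (g y)
      -- hm1 : dist v m = gpr v y (g y), hm2 : dist y m = gpr y v (g y),
      -- hm3 : dist (g y) m = gpr (g y) v y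
      have hbvm : MBtw v m y := by
        simp only [MBtw, gpr] at hm1 hm2 ⊢
        rw [hm1, dist_comm m y, hm2]
        linarith [dist_comm y v, dist_comm v (g y), dist_comm y (g y)]
      have hbvmgy : MBtw v m (g y) := by
        simp only [MBtw, gpr] at hm1 hm3 ⊢
        rw [hm1, dist_comm m (g y), hm3]
        linarith [dist_comm y v, dist_comm v (g y), dist_comm y (g y), dist_comm (g y) v,
          dist_comm (g y) y]
      have hgm : MBtw v (g m) (g y) := by
        have := mbtw_isom g hbvm
        rw [hfix] at this
        exact this
      have hmm : m = g m := by
        refine btw_unique h4 hbvmgy hgm ?_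
        have h := g.dist_eq v m
        rw [hfix] at h
        exact h.symm
      have hmC : dist m (g m) ≤ r := by
        rw [← hmm, dist_self]
        linarith [dist_nonneg (x := v) (y := g v)]
      have hgatem := hgate m hmC
      simp only [MBtw] at hbvm
      have hz : dist v m = 0 := by
        linarith [dist_comm y v, dist_comm v m, dist_comm m y, hgatem]
      have hkey : gpr v y (g y) = 0 := by rw [← hm1]; exact hz
      have hgvgy : dist (g v) (g y) = dist v y := g.dist_eq v y
      rw [hfix] at hgvgy
      simp only [gpr] at hkey
      linarith [dist_comm v y, dist_comm y v]
    · -- g v ≠ v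
      have e1 : dist y (g v) = dist y v + dist v (g v) := hgate (g v) hgvC
      have e2 : dist y (g⁻¹ v) = dist y v + dist v (g v) := by
        have := hgate (g⁻¹ v) hginvC
        rw [dist_comm v (g⁻¹ v), hinv1] at this
        exact this
      have p1 : gpr (g v) v (g y) = 0 := by
        have : gpr (g v) (g (g⁻¹ v)) (g y) = gpr v (g⁻¹ v) y := gpr_isom g v (g⁻¹ v) y
        rw [isom_inv_apply] at this
        rw [this]
        simp only [gpr]
        rw [dist_comm v (g⁻¹ v), hinv1, dist_comm v y, dist_comm (g⁻¹ v) y, e2]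
        ring
      have p2 : gpr (g v) v y = dist v (g v) := by
        simp only [gpr]
        rw [dist_comm (g v) v, dist_comm (g v) y, e1, dist_comm v y]
        ring
      have hmin := gpr_min_le h4 (g v) v (g y) y
      rw [p1, p2] at hmin
      have : gpr (g v) y (g y) ≤ 0 := by
        rcases min_le_iff.mp hmin with h | h
        · linarith
        · exact h
      have hz : gpr (g v) y (g y) = 0 := le_antisymm this (gpr_nonneg _ _ _)
      -- dist y (g y) = dist y (g v) + dist (g v) (g y)
      have hygy : dist y (g y) = dist y (g v) + dist (g v) (g y) := by
        simp only [gpr] at hz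
        linarith [dist_comm (g v) y, dist_comm (g v) (g y)]
      have hgvgy : dist (g v) (g y) = dist v y := g.dist_eq v y
      rw [hygy, e1, hgvgy]
      linarith [dist_comm v y]
  refine ⟨main, ?_⟩
  have hgvgy : dist (g v) (g y) = dist v y := g.dist_eq v y
  have hup : dist v (g y) ≤ dist v (g v) + dist v y := by
    have := dist_triangle v (g v) (g y)
    rw [hgvgy] at this
    linarith
  have htri : dist y (g y) ≤ dist y v + dist v (g y) := dist_triangle _ _ _
  simp only [MBtw]
  linarith [dist_comm v y]

end TreeGeom3
section TreeGeom4
variable {X : Type*} [MetricSpace X]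

lemma pow_apply_succ (w : X ≃ᵢ X) (n : ℕ) (z : X) :
    (w ^ (n + 1)) z = (w ^ n) (w z) := by
  rw [pow_succ]; rfl

lemma pow_apply_succ' (w : X ≃ᵢ X) (n : ℕ) (z : X) :
    (w ^ (n + 1)) (w⁻¹ z) = (w ^ n) z := by
  rw [pow_succ]
  show (w ^ n) (w (w⁻¹ z)) = (w ^ n) z
  rw [isom_inv_apply]

lemma disp_pow_le (w : X ≃ᵢ X) (y : X) : ∀ n : ℕ, dist y ((w ^ n) y) ≤ n * dist y (w y) := by
  intro n
  induction n with
  | zero => simp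
  | succ n ih =>
    have h1 : dist y ((w ^ (n+1)) y) ≤ dist y ((w ^ n) y) + dist ((w ^ n) y) ((w ^ (n+1)) y) :=
      dist_triangle _ _ _
    have h2 : dist ((w ^ n) y) ((w ^ (n+1)) y) = dist y (w y) := by
      rw [pow_apply_succ, (w ^ n).dist_eq]
    rw [h2] at h1
    push_cast
    linarith

/-- Chain lemma: no backtracking implies geodesic orbit. -/
lemma chain_lemma (h4 : FourPt X) (w : X ≃ᵢ X) (z : X) (hT : 0 < dist z (w z))
    (hc : gpr z (w z) (w⁻¹ z) = 0) :
    ∀ n : ℕ, dist z ((w ^ n) z) = n * dist z (w z) := by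
  set T := dist z (w z) with hTdef
  have step : ∀ n : ℕ, dist z ((w ^ n) z) = n * T ∧ dist z ((w ^ (n+1)) z) = (n+1) * T := by
    intro n
    induction n with
    | zero =>
      constructor
      · simp
      · simp [pow_one, hTdef]
    | succ n ih =>
      obtain ⟨h1, h2⟩ := ih
      refine ⟨by push_cast; push_cast at h2; exact h2, ?_⟩
      set v := (w ^ (n+1)) z with hv
      have d1 : dist v ((w ^ n) z) = T := by
        rw [hv, ← pow_apply_succ' w n z]
        rw [(w ^ (n+1)).dist_eq z (w⁻¹ z), dist_comm]
        rw [inv_disp]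
      have d2 : dist v ((w ^ (n+2)) z) = T := by
        rw [hv, pow_apply_succ w (n+1) z, (w ^ (n+1)).dist_eq]
      have hpush : gpr v ((w ^ n) z) ((w ^ (n+2)) z) = 0 := by
        have := gpr_isom (w ^ (n+1)) z (w⁻¹ z) (w z)
        rw [pow_apply_succ'] at this
        rw [← pow_apply_succ] at this
        rw [← hv] at this
        rw [this, gpr_comm]
        exact hc
      have hTn : gpr v ((w ^ n) z) z = T := by
        simp only [gpr]
        rw [d1, dist_comm v z, h2, dist_comm ((w ^ n) z) z, h1]
        push_cast
        ring
      have hmin := gpr_min_le h4 v ((w ^ n) z) ((w ^ (n+2)) z) z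
      rw [hpush, hTn] at hmin
      have hzero : gpr v z ((w ^ (n+2)) z) = 0 := by
        refine le_antisymm ?_ (gpr_nonneg _ _ _)
        rcases min_le_iff.mp hmin with h | h
        · linarith
        · exact h
      simp only [gpr] at hzero
      rw [d2, dist_comm v z, h2] at hzero
      push_cast at hzero ⊢
      linarith
  intro n
  exact (step n).1

end TreeGeom4
section TreeGeom5
variable {X : Type*} [MetricSpace X]

/-- Key separation lemma: if the sublevel sets `C_a(r)` and `C_b(r)` are nonempty and
disjoint, then every point is moved by `a*b` by more than `2r`. -/
lemma pair_sep (hgeo : GeodesicSpace X) (h4 : FourPt X) (hmed : HasMedians X)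
    (a b : X ≃ᵢ X) {r : ℝ} (hr : 0 < r)
    (hA : ∃ p, dist p (a p) ≤ r) (hB : ∃ q, dist q (b q) ≤ r)
    (hsep : ∀ x, dist x (a x) ≤ r → ¬ dist x (b x) ≤ r) :
    ∀ y : X, 2 * r < dist y ((a * b) y) := by
  obtain ⟨p, hp⟩ := hA
  obtain ⟨q₀, hq₀⟩ := hB
  obtain ⟨z, hzA, hzgate⟩ := gate_exists hgeo h4 hmed a r hp q₀
  obtain ⟨w', hw'B, hw'gate⟩ := gate_exists hgeo h4 hmed b r hq₀ z
  set e := dist z w' with he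
  have hepos : 0 < e := by
    rcases eq_or_lt_of_le (dist_nonneg : (0:ℝ) ≤ e) with h0 | h
    · exact absurd (((dist_eq_zero.mp h0.symm) : z = w') ▸ hw'B) (hsep z hzA)
    · exact h
  have hmut : ∀ x, dist x (a x) ≤ r → dist w' x = e + dist z x := by
    intro x hx
    have g1 : gpr z x q₀ = 0 := by
      have h := hzgate x hx
      simp only [gpr]
      linarith [dist_comm q₀ z, dist_comm q₀ x, dist_comm z x]
    have g2 : gpr z w' q₀ = e := by
      have h := hw'gate q₀ hq₀
      simp only [gpr]
      linarith [dist_comm z q₀, dist_comm w' q₀]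
    have hmin := gpr_min_le h4 z x q₀ w'
    rw [g1, g2] at hmin
    have h0 : gpr z x w' = 0 := by
      refine le_antisymm ?_ (gpr_nonneg _ _ _)
      rcases min_le_iff.mp hmin with h | h
      · exact h
      · linarith
    simp only [gpr] at h0
    linarith [dist_comm z x, dist_comm x w']
  -- boundary displacement values
  have hza : dist z (a z) = r := by
    by_contra hne
    have hlt : dist z (a z) < r := lt_of_le_of_ne hzA hne
    set t := min e ((r - dist z (a z)) / 2) with ht
    have htpos : 0 < t := lt_min hepos (by linarith)
    have htle : t ≤ e := min_le_left _ _
    obtain ⟨z', hz'1, hz'2⟩ := pointAt hgeo z w' (le_of_lt htpos) (by rw [← he]; exact htle)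
    have hz'A : dist z' (a z') ≤ r := by
      have h1 : dist z' (a z') ≤ dist z' z + dist z (a z) + dist (a z) (a z') :=
        dist_triangle4 _ _ _ _
      have h2 : dist (a z) (a z') = dist z z' := a.dist_eq _ _
      have h3 : t ≤ (r - dist z (a z)) / 2 := min_le_right _ _
      rw [h2] at h1
      linarith [dist_comm z z', hz'1.symm ▸ le_refl t]
    have hcon := hmut z' hz'A
    rw [hz'1] at hcon
    rw [← he] at hz'2
    linarith [dist_comm w' z', hz'2]
  have hw'b : dist w' (b w') = r := by
    by_contra hne
    have hlt : dist w' (b w') < r := lt_of_le_of_ne hw'B hne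
    set t := min e ((r - dist w' (b w')) / 2) with ht
    have htpos : 0 < t := lt_min hepos (by linarith)
    have htle : t ≤ e := min_le_left _ _
    obtain ⟨z'', hz''1, hz''2⟩ := pointAt hgeo z w' (by linarith : (0:ℝ) ≤ e - t)
      (by rw [← he]; linarith)
    rw [← he] at hz''2
    have hz''w' : dist z'' w' = t := by linarith
    have hz''B : dist z'' (b z'') ≤ r := by
      have h1 : dist z'' (b z'') ≤ dist z'' w' + dist w' (b w') + dist (b w') (b z'') :=
        dist_triangle4 _ _ _ _
      have h2 : dist (b w') (b z'') = dist w' z'' := b.dist_eq _ _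
      have h3 : t ≤ (r - dist w' (b w')) / 2 := min_le_right _ _
      rw [h2] at h1
      linarith [dist_comm w' z'', hz''w']
    have hcon := hw'gate z'' hz''B
    rw [hz''1] at hcon
    linarith [dist_nonneg (x := w') (y := z''), htpos, dist_comm w' z'', hz''w']
  -- Lemma G for b at z
  obtain ⟨hGz, hGbtw⟩ := lemG h4 hmed b hw'B hw'gate
  have hzbz : dist z (b z) = 2 * e + r := by rw [hGz, hw'b, ← he]
  -- a⁻¹ z
  have hdai : dist z (a⁻¹ z) = r := by rw [dist_comm, inv_disp, hza]
  have hainvA : dist (a⁻¹ z) (a (a⁻¹ z)) ≤ r := by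
    rw [isom_inv_apply, inv_disp, hza]
  -- overlap zero at z between directions to a⁻¹z and to b z
  have hov : gpr z (a⁻¹ z) (b z) = 0 := by
    obtain ⟨m, hm1, hm2, hm3⟩ := hmed z (a⁻¹ z) (b z)
    have hbm1 : MBtw z m (a⁻¹ z) := by
      simp only [MBtw, gpr] at hm1 hm2 ⊢
      rw [hm1, dist_comm m (a⁻¹ z), hm2]
      linarith [dist_comm (a⁻¹ z) z, dist_comm (a⁻¹ z) (b z), dist_comm z (b z),
        dist_comm (b z) z]
    have hbm2 : MBtw z m (b z) := by
      simp only [MBtw, gpr] at hm1 hm3 ⊢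
      rw [hm1, dist_comm m (b z), hm3]
      linarith [dist_comm (a⁻¹ z) z, dist_comm (a⁻¹ z) (b z), dist_comm z (b z),
        dist_comm (b z) z, dist_comm (b z) (a⁻¹ z)]
    have hmA : dist m (a m) ≤ r := disp_btw h4 a hzA hainvA hbm1
    rcases le_or_gt (dist z m) e with hce | hce
    · obtain ⟨hb3, hd3⟩ := btw_sub h4 hbm2 hGbtw (by rw [← he]; exact hce)
      have hcon := hmut m hmA
      rw [← he] at hd3
      have hc0 : dist z m = 0 := by
        have := dist_comm m w'
        linarith
      rw [← hm1]; exact hc0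
    · exfalso
      obtain ⟨hb3, hd3⟩ := btw_sub h4 hGbtw hbm2 (by rw [← he]; exact le_of_lt hce)
      have hcon := hmut m hmA
      rw [← he] at hd3
      linarith [dist_comm w' m]
  -- T and its value
  have hwz : (a * b) z = a (b z) := rfl
  have hT1 : dist z ((a * b) z) = dist (a⁻¹ z) (b z) := by
    rw [hwz, ← a.dist_eq (a⁻¹ z) (b z), isom_inv_apply]
  have hov' : dist (a⁻¹ z) (b z) = dist z (a⁻¹ z) + dist z (b z) := by
    simp only [gpr] at hov
    linarith
  have hTval : dist z ((a * b) z) = 2 * r + 2 * e := by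
    rw [hT1, hov', hdai, hzbz]; ring
  -- a z between z and (a*b) z
  have hbtw_az : MBtw z (a z) ((a * b) z) := by
    have hb : MBtw (a⁻¹ z) z (b z) := by
      simp only [MBtw]
      rw [hov']
      linarith [dist_comm (a⁻¹ z) z]
    have him := mbtw_isom a hb
    rw [isom_inv_apply] at him
    exact him
  -- b w' between z and b z
  have hw'bz : dist w' (b z) = e + r := by
    simp only [MBtw] at hGbtw
    rw [← he] at hGbtw
    linarith [hzbz]
  have hbw'bz : dist (b w') (b z) = e := by
    rw [b.dist_eq, dist_comm, ← he]
  have hzbw' : dist z (b w') = e + r := by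
    have h1 : dist z (b w') ≤ e + r := by
      calc dist z (b w') ≤ dist z w' + dist w' (b w') := dist_triangle _ _ _
      _ = e + r := by rw [← he, hw'b]
    have h2 : dist z (b z) ≤ dist z (b w') + dist (b w') (b z) := dist_triangle _ _ _
    rw [hzbz, hbw'bz] at h2
    linarith
  have hbtw_zbw'bz : MBtw z (b w') (b z) := by
    simp only [MBtw]
    rw [hzbw', hbw'bz, hzbz]; ring
  -- gpr z (a⁻¹ z) (b w') = 0
  have hov2 : gpr z (a⁻¹ z) (b w') = 0 := by
    have hmin := gpr_min_le h4 z (a⁻¹ z) (b z) (b w')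
    rw [hov] at hmin
    have hg : gpr z (b w') (b z) = e + r := by
      rw [gpr_of_mbtw hbtw_zbw'bz, hzbw']
    rw [hg] at hmin
    refine le_antisymm ?_ (gpr_nonneg _ _ _)
    rcases min_le_iff.mp hmin with h | h
    · exact h
    · linarith
  have hd_aibw : dist (a⁻¹ z) (b w') = 2 * r + e := by
    simp only [gpr] at hov2
    rw [hdai, hzbw'] at hov2
    linarith
  -- w' between z and (a*b)⁻¹ z
  have hwinv : ((a * b)⁻¹) z = b⁻¹ (a⁻¹ z) := rfl
  have hdzwinv : dist z ((a * b)⁻¹ z) = 2 * r + 2 * e := by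
    rw [dist_comm, inv_disp, hTval]
  have hw'winv : dist w' ((a * b)⁻¹ z) = 2 * r + e := by
    rw [hwinv]
    have h1 : dist (b w') (b (b⁻¹ (a⁻¹ z))) = dist w' (b⁻¹ (a⁻¹ z)) := b.dist_eq _ _
    rw [isom_inv_apply] at h1
    rw [← h1, dist_comm, hd_aibw]
  have hbtw_w'winv : MBtw z w' ((a * b)⁻¹ z) := by
    simp only [MBtw]
    rw [← he, hw'winv, hdzwinv]; ring
  -- products along the chain
  have hq1 : gpr z (a z) w' = 0 := by
    have hazA : dist (a z) (a (a z)) ≤ r := by rw [a.dist_eq]; exact hzA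
    have hcon := hmut (a z) hazA
    rw [hza] at hcon
    simp only [gpr]
    rw [hza, ← he]
    linarith [dist_comm (a z) w']
  have hg_az : gpr z (a z) ((a * b) z) = r := by
    rw [gpr_of_mbtw hbtw_az, hza]
  have hq2 : gpr z ((a * b) z) w' = 0 := by
    have hmin := gpr_min_le h4 z (a z) w' ((a * b) z)
    rw [hq1, hg_az] at hmin
    refine le_antisymm ?_ (gpr_nonneg _ _ _)
    rcases min_le_iff.mp hmin with h | h
    · linarith
    · exact h
  have hq3 : gpr z ((a * b) z) ((a * b)⁻¹ z) = 0 := by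
    have hmin := gpr_min_le h4 z ((a * b) z) w' ((a * b)⁻¹ z)
    rw [hq2] at hmin
    have hg : gpr z ((a * b)⁻¹ z) w' = e := by
      rw [gpr_comm, gpr_of_mbtw hbtw_w'winv, ← he]
    rw [hg] at hmin
    refine le_antisymm ?_ (gpr_nonneg _ _ _)
    rcases min_le_iff.mp hmin with h | h
    · exact h
    · linarith
  -- chain and conclusion
  have hTpos : 0 < dist z ((a * b) z) := by rw [hTval]; linarith
  have hchain := chain_lemma h4 (a * b) z hTpos hq3
  intro y
  have key : ∀ n : ℕ, (n : ℝ) * dist z ((a * b) z) ≤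
      2 * dist z y + n * dist y ((a * b) y) := by
    intro n
    have h1 : dist z (((a * b) ^ n) z) ≤ dist z y + dist y (((a * b) ^ n) y)
        + dist (((a * b) ^ n) y) (((a * b) ^ n) z) := dist_triangle4 _ _ _ _
    have h2 : dist (((a * b) ^ n) y) (((a * b) ^ n) z) = dist y z := ((a * b) ^ n).dist_eq _ _
    have h3 := disp_pow_le (a * b) y n
    rw [h2, hchain n] at h1
    linarith [dist_comm y z]
  have hfinal : dist z ((a * b) z) ≤ dist y ((a * b) y) := by
    by_contra hlt
    push_neg at hlt
    have hpos : 0 < dist z ((a * b) z) - dist y ((a * b) y) := by linarith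
    obtain ⟨n, hn⟩ := exists_nat_gt (2 * dist z y / (dist z ((a * b) z) - dist y ((a * b) y)))
    rw [div_lt_iff₀ hpos] at hn
    have hk := key n
    nlinarith
  rw [hTval] at hfinal
  linarith

end TreeGeom5
section TreeGeom6
variable {X : Type*} [MetricSpace X]

/-- Helly for three betweenness-convex sets. -/
lemma helly3 (h4 : FourPt X) (hmed : HasMedians X) (C1 C2 C3 : Set X)
    (hc1 : ∀ p ∈ C1, ∀ q ∈ C1, ∀ m, MBtw p m q → m ∈ C1)
    (hc2 : ∀ p ∈ C2, ∀ q ∈ C2, ∀ m, MBtw p m q → m ∈ C2)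
    (hc3 : ∀ p ∈ C3, ∀ q ∈ C3, ∀ m, MBtw p m q → m ∈ C3)
    (h12 : (C1 ∩ C2).Nonempty) (h13 : (C1 ∩ C3).Nonempty) (h23 : (C2 ∩ C3).Nonempty) :
    (C1 ∩ C2 ∩ C3).Nonempty := by
  obtain ⟨x, hx1, hx2⟩ := h12
  obtain ⟨y, hy1, hy3⟩ := h13
  obtain ⟨z, hz2, hz3⟩ := h23
  obtain ⟨m, hm1, hm2, hm3⟩ := hmed x y z
  have hbxy : MBtw x m y := by
    simp only [MBtw, gpr] at hm1 hm2 ⊢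
    rw [hm1, dist_comm m y, hm2]
    linarith [dist_comm x y, dist_comm x z, dist_comm y z]
  have hbxz : MBtw x m z := by
    simp only [MBtw, gpr] at hm1 hm3 ⊢
    rw [hm1, dist_comm m z, hm3]
    linarith [dist_comm x y, dist_comm x z, dist_comm y z]
  have hbyz : MBtw y m z := by
    simp only [MBtw, gpr] at hm2 hm3 ⊢
    rw [hm2, dist_comm m z, hm3]
    linarith [dist_comm x y, dist_comm x z, dist_comm y z]
  exact ⟨m, ⟨hc1 x hx1 y hy1 m hbxy, hc2 x hx2 z hz2 m hbxz⟩, hc3 y hy3 z hz3 m hbyz⟩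

/-- Helly for finite families of betweenness-convex sets. -/
lemma helly_finset (h4 : FourPt X) (hmed : HasMedians X) {ι : Type*} [DecidableEq ι] :
    ∀ (F : Finset ι) (C : ι → Set X),
      (∀ i ∈ F, ∀ p ∈ C i, ∀ q ∈ C i, ∀ m, MBtw p m q → m ∈ C i) →
      (∀ i ∈ F, ∀ j ∈ F, (C i ∩ C j).Nonempty) →
      F.Nonempty → (∃ x, ∀ i ∈ F, x ∈ C i) := by
  intro F
  induction F using Finset.induction_on with
  | empty => intro C _ _ hne; exact absurd hne (by simp)
  | @insert i F hiF ih =>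
    intro C hconv hpair _
    rcases Finset.eq_empty_or_nonempty F with hF | hFne
    · subst hF
      obtain ⟨x, hx, -⟩ := hpair i (by simp) i (by simp)
      exact ⟨x, by simpa using hx⟩
    · set C' : ι → Set X := fun j => C j ∩ C i with hC'
      have hconv' : ∀ j ∈ F, ∀ p ∈ C' j, ∀ q ∈ C' j, ∀ m, MBtw p m q → m ∈ C' j := by
        intro j hj p hp q hq m hm
        exact ⟨hconv j (Finset.mem_insert_of_mem hj) p hp.1 q hq.1 m hm,
          hconv i (Finset.mem_insert_self i F) p hp.2 q hq.2 m hm⟩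
      have hpair' : ∀ j ∈ F, ∀ k ∈ F, (C' j ∩ C' k).Nonempty := by
        intro j hj k hk
        have h3 := helly3 h4 hmed (C j) (C k) (C i)
          (hconv j (Finset.mem_insert_of_mem hj))
          (hconv k (Finset.mem_insert_of_mem hk))
          (hconv i (Finset.mem_insert_self i F))
          (hpair j (Finset.mem_insert_of_mem hj) k (Finset.mem_insert_of_mem hk))
          (hpair j (Finset.mem_insert_of_mem hj) i (Finset.mem_insert_self i F))
          (hpair k (Finset.mem_insert_of_mem hk) i (Finset.mem_insert_self i F))
        obtain ⟨x, ⟨hxj, hxk⟩, hxi⟩ := h3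
        exact ⟨x, ⟨hxj, hxi⟩, ⟨hxk, hxi⟩⟩
      obtain ⟨x, hx⟩ := ih C' hconv' hpair' hFne
      refine ⟨x, fun j hj => ?_⟩
      rcases Finset.mem_insert.mp hj with rfl | hjF
      · obtain ⟨k, hk⟩ := hFne
        exact (hx k hk).2
      · exact (hx j hjF).1

/-- In a tree, `L(g) ≤ L(g∘g)/2` (midpoint argument). -/
lemma transLen_sq (hgeo : GeodesicSpace X) (h4 : FourPt X) (g : X ≃ᵢ X) (x : X) :
    2 * transLen g ≤ dist x ((g * g) x) := by
  set t := dist x (g x) with htd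
  set s := dist x (g (g x)) with hsd
  have hs2t : s ≤ 2 * t := by
    have := dist_triangle x (g x) (g (g x))
    rw [g.dist_eq x (g x)] at this
    linarith
  have hsnn : 0 ≤ s := dist_nonneg
  obtain ⟨m, hm1, hm2⟩ := pointAt hgeo x (g x) (by positivity : (0:ℝ) ≤ t/2)
    (by rw [← htd]; linarith [dist_nonneg (x := x) (y := g x)])
  rw [← htd] at hm2
  have hm2' : dist m (g x) = t / 2 := by rw [hm2]; ring
  -- step 1 : dist x (g m) ≤ max (t/2) (s - t/2)
  have step1 : dist x (g m) ≤ max (t/2) (s - t/2) := by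
    have h := h4 x (g x) (g m) (g (g x))
    have e1 : dist (g x) (g (g x)) = t := by rw [g.dist_eq]
    have e2 : dist (g m) (g (g x)) = t/2 := by rw [g.dist_eq]; exact hm2'
    have e3 : dist (g x) (g m) = t/2 := by rw [g.dist_eq]; exact hm1
    rw [e1, e2, e3, ← htd, ← hsd] at h
    rcases max_cases (t + t/2) (s + t/2) with ⟨hmx, -⟩ | ⟨hmx, -⟩ <;> rw [hmx] at h
    · exact le_max_of_le_left (by linarith)
    · exact le_max_of_le_right (by linarith)
  -- step 2 : dist m (g m) ≤ max (dist x (g m) - t/2) 0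
  have step2 : dist m (g m) ≤ max (dist x (g m) - t/2) 0 := by
    have h := h4 m (g x) (g m) x
    have e3 : dist (g x) (g m) = t/2 := by rw [g.dist_eq]; exact hm1
    rcases max_cases (dist m (g x) + dist (g m) x) (dist m x + dist (g x) (g m))
      with ⟨hmx, -⟩ | ⟨hmx, -⟩ <;> rw [hmx] at h
    · exact le_max_of_le_left (by
        linarith [dist_comm (g m) x, dist_comm (g x) x, hm2', htd])
    · exact le_max_of_le_right (by
        linarith [dist_comm m x, dist_comm (g x) x, e3, hm1, htd])
  have hmgm : dist m (g m) ≤ s / 2 := by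
    rcases max_cases (dist x (g m) - t/2) (0:ℝ) with ⟨hmx, -⟩ | ⟨hmx, -⟩ <;> rw [hmx] at step2
    · rcases max_cases (t/2) (s - t/2) with ⟨hmy, -⟩ | ⟨hmy, -⟩ <;> rw [hmy] at step1 <;> linarith
    · linarith
  have hL : transLen g ≤ dist m (g m) :=
    csInf_le ⟨0, fun b ⟨y, hy⟩ => hy ▸ dist_nonneg⟩ ⟨m, rfl⟩
  have : (g * g) x = g (g x) := rfl
  rw [this, ← hsd]
  linarith

end TreeGeom6
section Assembly
variable {X : Type*} [MetricSpace X] [Nonempty X]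

lemma transLen_nonneg (g : X ≃ᵢ X) : 0 ≤ transLen g :=
  le_csInf (Set.range_nonempty _) (by rintro b ⟨x, rfl⟩; exact dist_nonneg)

lemma transLen_le (g : X ≃ᵢ X) (x : X) : transLen g ≤ dist x (g x) :=
  csInf_le ⟨0, by rintro b ⟨y, rfl⟩; exact dist_nonneg⟩ ⟨x, rfl⟩

lemma exists_disp_le (g : X ≃ᵢ X) {r : ℝ} (h : transLen g < r) : ∃ x, dist x (g x) ≤ r := by
  obtain ⟨b, ⟨x, rfl⟩, hb⟩ := exists_lt_of_csInf_lt (Set.range_nonempty _) h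
  exact ⟨x, le_of_lt hb⟩

lemma two_isom (hgeo : GeodesicSpace X) (h4 : FourPt X) (hmed : HasMedians X)
    (a b : X ≃ᵢ X) {r : ℝ} (hr : 0 < r)
    (ha : transLen a < r) (hb : transLen b < r) (hab : transLen (a * b) < 2 * r) :
    ∃ x, dist x (a x) ≤ r ∧ dist x (b x) ≤ r := by
  by_contra hcon
  push_neg at hcon
  obtain ⟨y, hy⟩ := exists_disp_le (a * b) hab
  have := pair_sep hgeo h4 hmed a b hr (exists_disp_le a ha) (exists_disp_le b hb) (fun x hx => not_le.mpr (hcon x hx)) y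
  linarith

lemma jointDispAt_eq_singleton (g : X ≃ᵢ X) :
    jointDispAt ({g} : Set (X ≃ᵢ X)) = fun x => dist x (g x) := by
  funext x
  unfold jointDispAt
  rw [Set.image_singleton, csSup_singleton]

lemma jointMinDisp_singleton (g : X ≃ᵢ X) : jointMinDisp ({g} : Set (X ≃ᵢ X)) = transLen g := by
  unfold jointMinDisp transLen
  rw [jointDispAt_eq_singleton]

lemma transLen_pow_le (g : X ≃ᵢ X) (x : X) (n : ℕ) :
    transLen (g ^ n) ≤ n * dist x (g x) :=
  le_trans (transLen_le (g ^ n) x) (disp_pow_le g x n)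

lemma transLen_double (hgeo : GeodesicSpace X) (h4 : FourPt X) (g : X ≃ᵢ X) :
    2 * transLen g ≤ transLen (g * g) := by
  refine le_csInf (Set.range_nonempty _) ?_
  rintro b ⟨x, rfl⟩
  exact transLen_sq hgeo h4 g x

lemma transLen_two_pow (hgeo : GeodesicSpace X) (h4 : FourPt X) (g : X ≃ᵢ X) (k : ℕ) :
    (2 ^ k : ℝ) * transLen g ≤ transLen (g ^ 2 ^ k) := by
  induction k with
  | zero => simp
  | succ k ih =>
    have hpow : g ^ 2 ^ (k+1) = g ^ 2 ^ k * g ^ 2 ^ k := by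
      rw [← pow_add]
      congr 1
      ring
    have hd := transLen_double hgeo h4 (g ^ 2 ^ k)
    rw [← hpow] at hd
    have h2 : (2 ^ (k+1) : ℝ) * transLen g = 2 * ((2 ^ k : ℝ) * transLen g) := by ring
    rw [h2]
    linarith

/-- In a real tree, the asymptotic translation length equals the translation length. -/
lemma asympDisp_singleton (hgeo : GeodesicSpace X) (h4 : FourPt X) (s : X ≃ᵢ X) :
    asympDisp ({s} : Set (X ≃ᵢ X)) = transLen s := by
  have hfun : (fun n : ℕ => jointMinDisp (({s} : Set (X ≃ᵢ X)) ^ n) / n)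
      = fun n : ℕ => transLen (s ^ n) / n := by
    funext n
    rw [Set.singleton_pow, jointMinDisp_singleton]
  unfold asympDisp
  rw [hfun]
  have hub : ∀ x : X, ∀ n : ℕ, transLen (s ^ n) / n ≤ dist x (s x) := by
    intro x n
    rcases Nat.eq_zero_or_pos n with rfl | hn
    · simpa using (dist_nonneg : (0:ℝ) ≤ dist x (s x))
    · rw [div_le_iff₀ (by exact_mod_cast hn : (0:ℝ) < n)]
      calc transLen (s ^ n) ≤ n * dist x (s x) := transLen_pow_le s x n
      _ = dist x (s x) * n := by ring
  have hlb : ∀ n : ℕ, 0 ≤ transLen (s ^ n) / n := fun n =>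
    div_nonneg (transLen_nonneg _) (Nat.cast_nonneg n)
  set x₀ : X := Classical.arbitrary X
  refine le_antisymm ?_ ?_
  · refine le_csInf (Set.range_nonempty _) ?_
    rintro b ⟨x, rfl⟩
    apply Filter.limsup_le_of_le
    · exact (Filter.isBoundedUnder_of ⟨0, fun n => hlb n⟩ :
        Filter.IsBoundedUnder (· ≥ ·) Filter.atTop _).isCoboundedUnder_le
    · filter_upwards with n using hub x n
  · refine Filter.le_limsup_of_frequently_le ?_ (Filter.isBoundedUnder_of ⟨dist x₀ (s x₀),
      fun n => hub x₀ n⟩)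
    rw [Filter.frequently_atTop]
    intro N
    refine ⟨2 ^ N, le_of_lt (Nat.lt_two_pow_self (n := N)), ?_⟩
    rw [le_div_iff₀ (by positivity : (0:ℝ) < ((2:ℕ) ^ N : ℕ))]
    calc transLen s * ((2:ℕ) ^ N : ℕ) = ((2:ℝ) ^ N) * transLen s := by push_cast; ring
    _ ≤ transLen (s ^ 2 ^ N) := transLen_two_pow hgeo h4 s N

end Assembly
/-- For a finite set `S` of isometries of a real tree (a geodesic `0`-hyperbolic
space), `L(S) = max_{a,b ∈ S} max{L(a), L(ab)/2} = λ₂(S)`. -/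
theorem jointMinDisp_formula_tree {X : Type*} [MetricSpace X]
    (hgeo : GeodesicSpace X) (htree : GromovHyperbolic X 0)
    (S : Set (X ≃ᵢ X)) (hfin : S.Finite) (hne : S.Nonempty) :
    jointMinDisp S =
      sSup ((fun p : (X ≃ᵢ X) × (X ≃ᵢ X) =>
        max (jointMinDisp {p.1}) (jointMinDisp {p.1 * p.2} / 2)) '' S ×ˢ S) ∧
    jointMinDisp S = max (lamD S) (lamD (S ^ 2) / 2) := by
  rcases isEmpty_or_nonempty X with hemp | hnon
  · -- X empty : everything is 0
    haveI := hemp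
    have hjm : ∀ T : Set (X ≃ᵢ X), jointMinDisp T = 0 := by
      intro T
      unfold jointMinDisp
      rw [Set.range_eq_empty, Real.sInf_empty]
    have hasym : ∀ s : X ≃ᵢ X, asympDisp ({s} : Set (X ≃ᵢ X)) = 0 := by
      intro s
      unfold asympDisp
      have h : (fun n : ℕ => jointMinDisp (({s} : Set (X ≃ᵢ X)) ^ n) / n)
          = fun _ => (0:ℝ) := by
        funext n; rw [hjm]; simp
      rw [h]
      exact Filter.limsup_const 0
    have hlam : ∀ T : Set (X ≃ᵢ X), T.Nonempty → lamD T = 0 := by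
      intro T hTne
      unfold lamD
      rw [show (fun s : X ≃ᵢ X => asympDisp ({s} : Set (X ≃ᵢ X))) = fun _ => (0:ℝ) from
        funext hasym, hTne.image_const 0, csSup_singleton]
    constructor
    · rw [hjm]
      rw [show (fun p : (X ≃ᵢ X) × (X ≃ᵢ X) =>
          max (jointMinDisp {p.1}) (jointMinDisp {p.1 * p.2} / 2)) = fun _ => (0:ℝ) from
        funext fun p => by rw [hjm, hjm]; norm_num]
      rw [(hne.prod hne).image_const 0, csSup_singleton]
    · rw [hjm, hlam S hne, hlam (S ^ 2) (by rw [sq]; exact hne.mul hne)]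
      norm_num
  · -- X nonempty
    have h4 := fourPt_of_tree htree hgeo
    have hmed := hasMedians_of_tree htree hgeo
    have hFeq : (fun p : (X ≃ᵢ X) × (X ≃ᵢ X) =>
        max (jointMinDisp {p.1}) (jointMinDisp {p.1 * p.2} / 2))
        = fun p => max (transLen p.1) (transLen (p.1 * p.2) / 2) :=
      funext fun p => by rw [jointMinDisp_singleton, jointMinDisp_singleton]
    rw [hFeq]
    set F : (X ≃ᵢ X) × (X ≃ᵢ X) → ℝ := fun p => max (transLen p.1) (transLen (p.1 * p.2) / 2)
      with hF
    set M := sSup (F '' S ×ˢ S) with hM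
    have hPfin : (S ×ˢ S).Finite := hfin.prod hfin
    have hPne : (S ×ˢ S).Nonempty := hne.prod hne
    have hbddF : BddAbove (F '' S ×ˢ S) := (hPfin.image F).bddAbove
    have hFle : ∀ p ∈ S ×ˢ S, F p ≤ M := fun p hp => le_csSup hbddF ⟨p, hp, rfl⟩
    have hMa : ∀ s ∈ S, transLen s ≤ M := by
      intro s hs
      have h := hFle (s, s) (Set.mem_prod.mpr ⟨hs, hs⟩)
      exact le_trans (le_max_left _ _) h
    have hMab : ∀ a ∈ S, ∀ b ∈ S, transLen (a * b) ≤ 2 * M := by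
      intro a ha b hb
      have h := hFle (a, b) (Set.mem_prod.mpr ⟨ha, hb⟩)
      have h2 := le_trans (le_max_right _ _) h
      simp only [hF] at h2
      linarith [h2]
    obtain ⟨s₀, hs₀⟩ := hne
    have hne' : S.Nonempty := ⟨s₀, hs₀⟩
    have hM0 : 0 ≤ M := le_trans (transLen_nonneg s₀) (hMa s₀ hs₀)
    have hDAle : ∀ s ∈ S, ∀ x : X, dist x (s x) ≤ jointDispAt S x := by
      intro s hs x
      exact le_csSup ((hfin.image _).bddAbove) ⟨s, hs, rfl⟩
    have hDAnn : ∀ x : X, 0 ≤ jointDispAt S x := fun x =>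
      le_trans dist_nonneg (hDAle s₀ hs₀ x)
    have hJbdd : BddBelow (Set.range (jointDispAt S)) :=
      ⟨0, by rintro b ⟨x, rfl⟩; exact hDAnn x⟩
    have hard : ∀ r : ℝ, M < r → jointMinDisp S ≤ r := by
      intro r hr
      have hr0 : 0 < r := lt_of_le_of_lt hM0 hr
      classical
      obtain ⟨x, hx⟩ := helly_finset h4 hmed hfin.toFinset
        (fun s : X ≃ᵢ X => {x : X | dist x (s x) ≤ r})
        (fun i _ p hp q hq m hm => disp_btw h4 i hp hq hm)
        (fun i hi j hj => by
          have hi' := hfin.mem_toFinset.mp hi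
          have hj' := hfin.mem_toFinset.mp hj
          obtain ⟨y, hy1, hy2⟩ := two_isom hgeo h4 hmed i j hr0
            (lt_of_le_of_lt (hMa i hi') hr) (lt_of_le_of_lt (hMa j hj') hr)
            (lt_of_le_of_lt (hMab i hi' j hj') (by linarith))
          exact ⟨y, hy1, hy2⟩)
        (hfin.toFinset_nonempty.mpr hne')
      have h1 : jointMinDisp S ≤ jointDispAt S x := csInf_le hJbdd ⟨x, rfl⟩
      have h2 : jointDispAt S x ≤ r := by
        refine csSup_le (hne'.image _) ?_
        rintro b ⟨s, hs, rfl⟩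
        exact hx s (hfin.mem_toFinset.mpr hs)
      linarith
    have hupper : jointMinDisp S ≤ M := by
      by_contra h
      push_neg at h
      obtain ⟨r, hr1, hr2⟩ := exists_between h
      exact absurd (hard r hr1) (not_le.mpr hr2)
    have hlower : M ≤ jointMinDisp S := by
      refine csSup_le (hPne.image F) ?_
      rintro b ⟨p, hp, rfl⟩
      have hp1 : p.1 ∈ S := (Set.mem_prod.mp hp).1
      have hp2 : p.2 ∈ S := (Set.mem_prod.mp hp).2
      simp only [hF]
      refine max_le ?_ ?_
      · refine le_csInf (Set.range_nonempty _) ?_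
        rintro b ⟨x, rfl⟩
        exact le_trans (transLen_le p.1 x) (hDAle p.1 hp1 x)
      · refine le_csInf (Set.range_nonempty _) ?_
        rintro b ⟨x, rfl⟩
        have h1 : transLen (p.1 * p.2) ≤ dist x ((p.1 * p.2) x) := transLen_le _ x
        have h2 : dist x ((p.1 * p.2) x) ≤ dist x (p.1 x) + dist (p.1 x) (p.1 (p.2 x)) := by
          exact dist_triangle _ _ _
        rw [p.1.dist_eq x (p.2 x)] at h2
        have h3 := hDAle p.1 hp1 x
        have h4' := hDAle p.2 hp2 x
        linarith
    have part1 : jointMinDisp S = M := le_antisymm hupper hlower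
    refine ⟨part1, ?_⟩
    have hlamS : lamD S = sSup (transLen '' S) := by
      unfold lamD
      congr 1
      exact Set.image_congr fun s _ => asympDisp_singleton hgeo h4 s
    have hS2fin : (S ^ 2).Finite := by rw [sq]; exact hfin.mul hfin
    have hS2ne : (S ^ 2).Nonempty := by rw [sq]; exact hne'.mul hne'
    have hlamS2 : lamD (S ^ 2) = sSup (transLen '' (S ^ 2)) := by
      unfold lamD
      congr 1
      exact Set.image_congr fun s _ => asympDisp_singleton hgeo h4 s
    rw [part1]
    refine le_antisymm ?_ ?_
    · refine csSup_le (hPne.image F) ?_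
      rintro b ⟨p, hp, rfl⟩
      have hp1 : p.1 ∈ S := (Set.mem_prod.mp hp).1
      have hp2 : p.2 ∈ S := (Set.mem_prod.mp hp).2
      simp only [hF]
      refine max_le ?_ ?_
      · refine le_trans ?_ (le_max_left _ _)
        rw [hlamS]
        exact le_csSup (hfin.image _).bddAbove ⟨p.1, hp1, rfl⟩
      · refine le_trans ?_ (le_max_right _ _)
        rw [hlamS2]
        have hmem : p.1 * p.2 ∈ S ^ 2 := by rw [sq]; exact Set.mul_mem_mul hp1 hp2
        have h := le_csSup (hS2fin.image transLen).bddAbove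
          (⟨p.1 * p.2, hmem, rfl⟩ : transLen (p.1 * p.2) ∈ transLen '' (S ^ 2))
        linarith
    · refine max_le ?_ ?_
      · rw [hlamS]
        refine csSup_le (hne'.image _) ?_
        rintro b ⟨s, hs, rfl⟩
        exact hMa s hs
      · rw [hlamS2]
        have h2M : sSup (transLen '' (S ^ 2)) ≤ 2 * M := by
          refine csSup_le (hS2ne.image _) ?_
          rintro b ⟨u, hu, rfl⟩
          rw [sq] at hu
          obtain ⟨a', ha', b', hb', rfl⟩ := Set.mem_mul.mp hu
          exact hMab a' ha' b' hb'
        linarith
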